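/- Let G be a graph and e = uv an edge of G. Then e is γ-S⁺-critical (i.e., γ(G_e) > γ(G), where G_e is G with e subdivided once) if and only if for every minimum dominating set M of G one of the following holds: (i) u, v ∉ M; (ii) u ∈ M, v ∈ pn_G[u,M], and pn_G[u,M] is not a subset of {u,v}; (iii) v ∈ M, u ∈ pn_G[v,M], and pn_G[v,M] is not a subset of {u,v}. -/

import Mathlib

open SimpleGraph

/-- A graph property: a class of finite simple graphs on arbitrary vertex types. -/
abbrev GraphProp := ∀ (V : Type), SimpleGraph V → Prop

/-- Closure under graph isomorphism. -/
def IsoClosed (P : GraphProp) : Prop :=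
  ∀ (V W : Type) (G : SimpleGraph V) (H : SimpleGraph W), Nonempty (G ≃g H) → P V G → P W H

/-- A property is nondegenerate if it contains all edgeless graphs. -/
def Nondegenerate (P : GraphProp) : Prop :=
  IsoClosed P ∧ ∀ (V : Type), P V ⊥

/-- Closed under induced subgraphs. -/
def InducedHereditary (P : GraphProp) : Prop :=
  IsoClosed P ∧ ∀ (V : Type) (G : SimpleGraph V) (s : Set V), P V G → P s (G.induce s)

/-- Closed under all subgraphs. -/
def Hereditary (P : GraphProp) : Prop :=
  InducedHereditary P ∧ ∀ (V : Type) (G G' : SimpleGraph V), G' ≤ G → P V G → P V G'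

/-- The graph `G` together with one new isolated vertex. -/
def addK1 {V : Type} (G : SimpleGraph V) : SimpleGraph (V ⊕ Unit) where
  Adj a b := ∃ x y, a = Sum.inl x ∧ b = Sum.inl y ∧ G.Adj x y
  symm := ⟨by rintro a b ⟨x, y, rfl, rfl, h⟩; exact ⟨y, x, rfl, rfl, h.symm⟩⟩
  loopless := ⟨by rintro a ⟨x, y, rfl, hy, h⟩; simp only [Sum.inl.injEq] at hy; subst hy; exact G.loopless.irrefl _ h⟩

/-- Closure under disjoint union with `K₁`. -/
def ClosedUnderK1 (P : GraphProp) : Prop :=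
  ∀ (V : Type) (G : SimpleGraph V), P V G → P (V ⊕ Unit) (addK1 G)

/-- `S` is a dominating set of `G`. -/
def IsDominating {V : Type} (G : SimpleGraph V) (S : Set V) : Prop :=
  ∀ v ∉ S, ∃ u ∈ S, G.Adj u v

/-- `S` is a dominating set inducing a subgraph with property `P`. -/
def IsDomPSet (P : GraphProp) {V : Type} (G : SimpleGraph V) (S : Set V) : Prop :=
  IsDominating G S ∧ P S (G.induce S)

/-- The domination number with respect to the property `P`. -/
noncomputable def gammaP (P : GraphProp) {V : Type} [Fintype V] (G : SimpleGraph V) : ℕ :=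
  sInf (Set.ncard '' {S : Set V | IsDomPSet P G S})

/-- A minimum dominating `P`-set. -/
def IsGammaSet (P : GraphProp) {V : Type} [Fintype V] (G : SimpleGraph V) (S : Set V) : Prop :=
  IsDomPSet P G S ∧ S.ncard = gammaP P G

/-- The ordinary domination number. -/
noncomputable def gamma {V : Type} [Fintype V] (G : SimpleGraph V) : ℕ :=
  sInf (Set.ncard '' {S : Set V | IsDominating G S})

/-- The graph obtained from `G` by deleting the edge `uv` and replacing it by the
path `u - x₀ - x₁ - ⋯ - x_{t-1} - v` through `t` new vertices. -/
def subdiv {V : Type} (G : SimpleGraph V) (u v : V) (t : ℕ) : SimpleGraph (V ⊕ Fin t) where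
  Adj a b := match a, b with
    | Sum.inl a, Sum.inl b => G.Adj a b ∧ ¬((a = u ∧ b = v) ∨ (a = v ∧ b = u))
    | Sum.inl a, Sum.inr i => (a = u ∧ (i : ℕ) = 0) ∨ (a = v ∧ (i : ℕ) + 1 = t)
    | Sum.inr i, Sum.inl a => (a = u ∧ (i : ℕ) = 0) ∨ (a = v ∧ (i : ℕ) + 1 = t)
    | Sum.inr i, Sum.inr j => (i : ℕ) + 1 = (j : ℕ) ∨ (j : ℕ) + 1 = (i : ℕ)
  symm := ⟨by
    rintro (a | i) (b | j) h
    · exact ⟨h.1.symm, fun hc => h.2 (by tauto)⟩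
    · exact h
    · exact h
    · tauto⟩
  loopless := ⟨by
    rintro (a | i) h
    · exact G.loopless.irrefl a h.1
    · omega⟩

/-- The private neighbour set `pn_G[x, X] = {y : N[y,G] ∩ X = {x}}`. -/
def pn {V : Type} (G : SimpleGraph V) (X : Set V) (x : V) : Set V :=
  {y | insert y (G.neighborSet y) ∩ X = {x}}

/-- The graph `G` with the vertex `v` deleted. -/
abbrev delVert {V : Type} (G : SimpleGraph V) (v : V) : SimpleGraph {w : V // w ≠ v} :=
  G.induce {w : V | w ≠ v}

/-- An independent set. -/
def IsIndep {V : Type} (G : SimpleGraph V) (S : Set V) : Prop :=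
  S.Pairwise fun a b => ¬ G.Adj a b

private lemma gamma_le' {V : Type} [Fintype V] {G : SimpleGraph V} {S : Set V}
    (h : IsDominating G S) : gamma G ≤ S.ncard :=
  Nat.sInf_le ⟨S, h, rfl⟩

private lemma exists_gammaSet {V : Type} [Fintype V] (G : SimpleGraph V) :
    ∃ S : Set V, IsDominating G S ∧ S.ncard = gamma G := by
  have hne : (Set.ncard '' {S : Set V | IsDominating G S}).Nonempty :=
    ⟨_, ⟨Set.univ, fun w hw => absurd (Set.mem_univ w) hw, rfl⟩⟩
  obtain ⟨S, hS, hcard⟩ := Nat.sInf_mem hne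
  exact ⟨S, hS, hcard⟩

private lemma mem_pn_iff {V : Type} (G : SimpleGraph V) (X : Set V) (x y : V) :
    y ∈ pn G X x ↔ (x ∈ X ∧ (x = y ∨ G.Adj y x) ∧ ∀ z ∈ X, (z = y ∨ G.Adj y z) → z = x) := by
  simp only [pn, Set.mem_setOf_eq, Set.eq_singleton_iff_unique_mem, Set.mem_inter_iff,
    Set.mem_insert_iff, SimpleGraph.mem_neighborSet]
  constructor
  · rintro ⟨⟨hxy, hxX⟩, huniq⟩
    exact ⟨hxX, hxy, fun z hz h => huniq z ⟨h, hz⟩⟩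
  · rintro ⟨hxX, hxy, hall⟩
    exact ⟨⟨hxy, hxX⟩, fun z hz => hall z hz.2 hz.1⟩

private lemma subdiv1_adj_ll {V : Type} (G : SimpleGraph V) (u v a b : V) :
    (subdiv G u v 1).Adj (Sum.inl a) (Sum.inl b) ↔
      G.Adj a b ∧ ¬((a = u ∧ b = v) ∨ (a = v ∧ b = u)) := Iff.rfl

private lemma subdiv1_adj_lr {V : Type} (G : SimpleGraph V) (u v a : V) (i : Fin 1) :
    (subdiv G u v 1).Adj (Sum.inl a) (Sum.inr i) ↔ (a = u ∨ a = v) := by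
  have hi : (i : ℕ) = 0 := Nat.lt_one_iff.mp i.isLt
  show ((a = u ∧ (i : ℕ) = 0) ∨ (a = v ∧ (i : ℕ) + 1 = 1)) ↔ _
  rw [hi]
  simp

private lemma subdiv1_adj_rl {V : Type} (G : SimpleGraph V) (u v a : V) (i : Fin 1) :
    (subdiv G u v 1).Adj (Sum.inr i) (Sum.inl a) ↔ (a = u ∨ a = v) := by
  have hi : (i : ℕ) = 0 := Nat.lt_one_iff.mp i.isLt
  show ((a = u ∧ (i : ℕ) = 0) ∨ (a = v ∧ (i : ℕ) + 1 = 1)) ↔ _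
  rw [hi]
  simp

private lemma subdiv1_adj_rr {V : Type} (G : SimpleGraph V) (u v : V) (i j : Fin 1) :
    ¬ (subdiv G u v 1).Adj (Sum.inr i) (Sum.inr j) := by
  have hi : (i : ℕ) = 0 := Nat.lt_one_iff.mp i.isLt
  have hj : (j : ℕ) = 0 := Nat.lt_one_iff.mp j.isLt
  show ¬ ((i : ℕ) + 1 = (j : ℕ) ∨ (j : ℕ) + 1 = (i : ℕ))
  omega

private lemma subdiv_one_comm {V : Type} (G : SimpleGraph V) (u v : V) :
    subdiv G u v 1 = subdiv G v u 1 := by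
  ext a b
  cases a with
  | inl a =>
    cases b with
    | inl b =>
      rw [subdiv1_adj_ll, subdiv1_adj_ll]
      tauto
    | inr i =>
      rw [subdiv1_adj_lr, subdiv1_adj_lr]
      tauto
  | inr i =>
    cases b with
    | inl b =>
      rw [subdiv1_adj_rl, subdiv1_adj_rl]
      tauto
    | inr j =>
      constructor
      · exact fun h => absurd h (subdiv1_adj_rr G u v i j)
      · exact fun h => absurd h (subdiv1_adj_rr G v u i j)

private lemma forward_aux {V : Type} [Fintype V] {G : SimpleGraph V} {u v : V}
    (he : G.Adj u v) {M : Set V} (hMdom : IsDominating G M) (hu : u ∈ M) (hv : v ∉ M)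
    (hcond : v ∈ pn G M u → pn G M u ⊆ {u, v}) :
    ∃ D : Set (V ⊕ Fin 1), IsDominating (subdiv G u v 1) D ∧ D.ncard ≤ M.ncard := by
  by_cases hpnv : v ∈ pn G M u
  · have hsub : pn G M u ⊆ {u, v} := hcond hpnv
    refine ⟨insert (Sum.inr 0) (Sum.inl '' (M \ {u})), ?_, ?_⟩
    · rintro (a | i) hw
      · by_cases hau : a = u
        · exact ⟨Sum.inr 0, Set.mem_insert _ _, (subdiv1_adj_rl G u v a 0).mpr (Or.inl hau)⟩
        · by_cases hav : a = v
          · exact ⟨Sum.inr 0, Set.mem_insert _ _, (subdiv1_adj_rl G u v a 0).mpr (Or.inr hav)⟩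
          · have haM : a ∉ M := by
              intro haM
              exact hw (Set.mem_insert_of_mem _ ⟨a, ⟨haM, hau⟩, rfl⟩)
            by_cases hex : ∃ m ∈ M, m ≠ u ∧ G.Adj m a
            · obtain ⟨m, hm, hmu, hma⟩ := hex
              refine ⟨Sum.inl m, Set.mem_insert_of_mem _ ⟨m, ⟨hm, hmu⟩, rfl⟩,
                (subdiv1_adj_ll G u v m a).mpr ⟨hma, ?_⟩⟩
              rintro (⟨h1, h2⟩ | ⟨h1, h2⟩)
              · exact hmu h1
              · exact hau h2
            · push_neg at hex
              have hapn : a ∈ pn G M u := by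
                rw [mem_pn_iff]
                obtain ⟨m, hm, hma⟩ := hMdom a haM
                have hmu : m = u := by
                  by_contra hne
                  exact hex m hm hne hma
                subst hmu
                refine ⟨hu, Or.inr hma.symm, ?_⟩
                rintro z hz (rfl | hadj)
                · exact absurd hz haM
                · by_contra hzu
                  exact hex z hz hzu hadj.symm
              have h2 := hsub hapn
              simp only [Set.mem_insert_iff, Set.mem_singleton_iff] at h2
              rcases h2 with h | h
              · exact absurd h hau
              · exact absurd h hav
      · exfalso
        have hi : i = 0 := Subsingleton.elim i 0
        subst hi
        exact hw (Set.mem_insert _ _)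
    · have h1 : (Sum.inr 0 : V ⊕ Fin 1) ∉ Sum.inl '' (M \ {u}) := by simp
      rw [Set.ncard_insert_of_notMem h1, Set.ncard_image_of_injective _ Sum.inl_injective,
        Set.ncard_diff_singleton_add_one hu]
  · refine ⟨Sum.inl '' M, ?_, (Set.ncard_image_of_injective _ Sum.inl_injective).le⟩
    rintro (a | i) hw
    · have haM : a ∉ M := fun h => hw ⟨a, h, rfl⟩
      by_cases hav : a = v
      · rw [mem_pn_iff] at hpnv
        push_neg at hpnv
        obtain ⟨z, hz, hzcond, hzu⟩ := hpnv hu (Or.inr he.symm)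
        have hzv : G.Adj z a := by
          rw [hav]
          rcases hzcond with rfl | h
          · exact absurd hz hv
          · exact h.symm
        refine ⟨Sum.inl z, ⟨z, hz, rfl⟩, (subdiv1_adj_ll G u v z a).mpr ⟨hzv, ?_⟩⟩
        rintro (⟨h1, _⟩ | ⟨_, h2⟩)
        · exact hzu h1
        · exact he.ne (by rw [← h2]; exact hav)
      · obtain ⟨m, hm, hma⟩ := hMdom a haM
        refine ⟨Sum.inl m, ⟨m, hm, rfl⟩, (subdiv1_adj_ll G u v m a).mpr ⟨hma, ?_⟩⟩
        rintro (⟨_, h2⟩ | ⟨h1, _⟩)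
        · exact hav h2
        · exact hv (h1 ▸ hm)
    · exact ⟨Sum.inl u, ⟨u, hu, rfl⟩, (subdiv1_adj_lr G u v u i).mpr (Or.inl rfl)⟩

/-- an edge `e = uv` is `γ`-S⁺-critical iff every minimum dominating set `M`
of `G` satisfies (i), (ii) or (iii). -/
theorem gamma_splus_critical_iff {V : Type} [Fintype V] (G : SimpleGraph V)
    (u v : V) (he : G.Adj u v) :
    gamma G < gamma (subdiv G u v 1) ↔
    ∀ M : Set V, (IsDominating G M ∧ M.ncard = gamma G) →
      ((u ∉ M ∧ v ∉ M) ∨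
       (u ∈ M ∧ v ∈ pn G M u ∧ ¬ pn G M u ⊆ {u, v}) ∨
       (v ∈ M ∧ u ∈ pn G M v ∧ ¬ pn G M v ⊆ {u, v})) := by
  constructor
  · intro hlt M hM
    obtain ⟨hMdom, hMcard⟩ := hM
    by_contra hcon
    push_neg at hcon
    obtain ⟨hc1, hc2, hc3⟩ := hcon
    have hD : ∃ D : Set (V ⊕ Fin 1), IsDominating (subdiv G u v 1) D ∧ D.ncard ≤ M.ncard := by
      by_cases hu : u ∈ M
      · by_cases hv : v ∈ M
        · refine ⟨Sum.inl '' M, ?_, (Set.ncard_image_of_injective _ Sum.inl_injective).le⟩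
          rintro (a | i) hw
          · have haM : a ∉ M := fun h => hw ⟨a, h, rfl⟩
            obtain ⟨m, hm, hma⟩ := hMdom a haM
            refine ⟨Sum.inl m, ⟨m, hm, rfl⟩, (subdiv1_adj_ll G u v m a).mpr ⟨hma, ?_⟩⟩
            rintro (⟨_, h2⟩ | ⟨_, h2⟩)
            · exact haM (h2 ▸ hv)
            · exact haM (h2 ▸ hu)
          · exact ⟨Sum.inl u, ⟨u, hu, rfl⟩, (subdiv1_adj_lr G u v u i).mpr (Or.inl rfl)⟩
        · exact forward_aux he hMdom hu hv (hc2 hu)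
      · have hv : v ∈ M := hc1 hu
        obtain ⟨D, hDdom, hDle⟩ := forward_aux he.symm hMdom hv hu
          (fun h => Set.pair_comm u v ▸ hc3 hv h)
        refine ⟨D, ?_, hDle⟩
        rw [subdiv_one_comm]
        exact hDdom
    obtain ⟨D, hDdom, hDle⟩ := hD
    have hge := gamma_le' hDdom
    omega
  · intro hyp
    by_contra hnl
    push_neg at hnl
    obtain ⟨D, hDdom, hDcard⟩ := exists_gammaSet (subdiv G u v 1)
    set x : V ⊕ Fin 1 := Sum.inr 0 with hxdef
    set M₀ : Set V := Sum.inl ⁻¹' D with hM₀def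
    have hDle : D.ncard ≤ gamma G := le_trans (le_of_eq hDcard) hnl
    by_cases hx : x ∈ D
    · have hDeq : D = insert x (Sum.inl '' M₀) := by
        ext d
        cases d with
        | inl a => simp [hM₀def, hxdef]
        | inr i =>
          have hi : i = 0 := Subsingleton.elim i 0
          subst hi
          simp [hxdef, hx, hM₀def]
          exact hx
      have hxim : x ∉ Sum.inl '' M₀ := by simp [hxdef]
      have hcard : M₀.ncard + 1 = D.ncard := by
        rw [hDeq, Set.ncard_insert_of_notMem hxim,
          Set.ncard_image_of_injective _ Sum.inl_injective]
      by_cases huv : u ∈ M₀ ∨ v ∈ M₀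
      · have hdom : IsDominating G M₀ := by
          intro w hw
          obtain ⟨d, hd, hadj⟩ := hDdom (Sum.inl w) hw
          cases d with
          | inl a => exact ⟨a, hd, ((subdiv1_adj_ll G u v a w).mp hadj).1⟩
          | inr i =>
            rcases (subdiv1_adj_rl G u v w i).mp hadj with rfl | rfl
            · rcases huv with h | h
              · exact absurd h hw
              · exact ⟨v, h, he.symm⟩
            · rcases huv with h | h
              · exact ⟨u, h, he⟩
              · exact absurd h hw
        have := gamma_le' hdom
        omega
      · push_neg at huv
        obtain ⟨huM, hvM⟩ := huv
        have hdom : IsDominating G (insert u M₀) := by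
          intro w hw
          have hwu : w ≠ u := fun h => hw (h ▸ Set.mem_insert _ _)
          have hwM₀ : w ∉ M₀ := fun h => hw (Set.mem_insert_of_mem _ h)
          obtain ⟨d, hd, hadj⟩ := hDdom (Sum.inl w) hwM₀
          cases d with
          | inl a => exact ⟨a, Set.mem_insert_of_mem _ hd, ((subdiv1_adj_ll G u v a w).mp hadj).1⟩
          | inr i =>
            rcases (subdiv1_adj_rl G u v w i).mp hadj with rfl | rfl
            · exact absurd rfl hwu
            · exact ⟨u, Set.mem_insert _ _, he⟩
        have hMcard : (insert u M₀).ncard = gamma G := by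
          have h1 : (insert u M₀).ncard ≤ M₀.ncard + 1 := Set.ncard_insert_le _ _
          have h2 := gamma_le' hdom
          omega
        rcases hyp (insert u M₀) ⟨hdom, hMcard⟩ with ⟨h1, _⟩ | ⟨_, _, hns⟩ | ⟨h1, _, _⟩
        · exact h1 (Set.mem_insert _ _)
        · obtain ⟨y, hy, hyuv⟩ := Set.not_subset.mp hns
          simp only [Set.mem_insert_iff, Set.mem_singleton_iff] at hyuv
          push_neg at hyuv
          obtain ⟨hyu, hyv⟩ := hyuv
          rw [mem_pn_iff] at hy
          obtain ⟨_, _, hall⟩ := hy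
          have hyM : y ∉ insert u M₀ := fun h => hyu (hall y h (Or.inl rfl))
          have hyM₀ : y ∉ M₀ := fun h => hyM (Set.mem_insert_of_mem _ h)
          obtain ⟨d, hd, hadj⟩ := hDdom (Sum.inl y) hyM₀
          cases d with
          | inl a =>
            have ha : a ∈ M₀ := hd
            have hau : a = u := hall a (Set.mem_insert_of_mem _ ha)
              (Or.inr ((subdiv1_adj_ll G u v a y).mp hadj).1.symm)
            exact huM (hau ▸ ha)
          | inr i =>
            rcases (subdiv1_adj_rl G u v y i).mp hadj with h | h
            · exact hyu h
            · exact hyv h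
        · rcases Set.mem_insert_iff.mp h1 with h | h
          · exact he.ne' h
          · exact hvM h
    · have hdom : IsDominating G M₀ := by
        intro w hw
        obtain ⟨d, hd, hadj⟩ := hDdom (Sum.inl w) hw
        cases d with
        | inl a => exact ⟨a, hd, ((subdiv1_adj_ll G u v a w).mp hadj).1⟩
        | inr i =>
          exfalso
          have hi : i = 0 := Subsingleton.elim i 0
          subst hi
          exact hx hd
      have hcard : M₀.ncard = D.ncard := by
        have hDeq : D = Sum.inl '' M₀ := by
          ext d
          cases d with
          | inl a => simp [hM₀def]
          | inr i =>
            have hi : i = 0 := Subsingleton.elim i 0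
            subst hi
            exact iff_of_false hx (by simp)
        rw [hDeq, Set.ncard_image_of_injective _ Sum.inl_injective]
      have hM₀card : M₀.ncard = gamma G :=
        le_antisymm (hcard ▸ hDle) (gamma_le' hdom)
      obtain ⟨d, hd, hadjx⟩ := hDdom x hx
      have hd' : d = Sum.inl u ∨ d = Sum.inl v := by
        cases d with
        | inl a =>
          rcases (subdiv1_adj_lr G u v a 0).mp hadjx with rfl | rfl
          · exact Or.inl rfl
          · exact Or.inr rfl
        | inr i => exact absurd hadjx (subdiv1_adj_rr G u v i 0)
      rcases hyp M₀ ⟨hdom, hM₀card⟩ with ⟨h1, h2⟩ | ⟨_, hpn, _⟩ | ⟨_, hpn, _⟩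
      · rcases hd' with rfl | rfl
        · exact h1 hd
        · exact h2 hd
      · rw [mem_pn_iff] at hpn
        obtain ⟨_, _, hall⟩ := hpn
        have hvM₀ : v ∉ M₀ := fun h => he.ne' (hall v h (Or.inl rfl))
        obtain ⟨d2, hd2, hadj2⟩ := hDdom (Sum.inl v) hvM₀
        cases d2 with
        | inl a =>
          obtain ⟨hGa, hnot⟩ := (subdiv1_adj_ll G u v a v).mp hadj2
          exact hnot (Or.inl ⟨hall a hd2 (Or.inr hGa.symm), rfl⟩)
        | inr i =>
          have hi : i = 0 := Subsingleton.elim i 0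
          subst hi
          exact hx hd2
      · rw [mem_pn_iff] at hpn
        obtain ⟨_, _, hall⟩ := hpn
        have huM₀ : u ∉ M₀ := fun h => he.ne (hall u h (Or.inl rfl))
        obtain ⟨d2, hd2, hadj2⟩ := hDdom (Sum.inl u) huM₀
        cases d2 with
        | inl a =>
          obtain ⟨hGa, hnot⟩ := (subdiv1_adj_ll G u v a u).mp hadj2
          exact hnot (Or.inr ⟨hall a hd2 (Or.inr hGa.symm), rfl⟩)
        | inr i =>
          have hi : i = 0 := Subsingleton.elim i 0
          subst hi
          exact hx hd2
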